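/- Let H be a Hilbert space and V, W closed subspaces. The pair (V, W) is a Fredholm pair (i.e., V + W is closed, dim(V ∩ W) < ∞, and codim(V + W) < ∞) if and only if the restriction to V of the orthogonal projection onto W^⊥ is a Fredholm operator; moreover, in that case ind(V,W) := dim(V∩W) - codim(V+W) equals the Fredholm index of P_{W^⊥}|_V. -/

import Mathlib

open RealInnerProductSpace

set_option synthInstance.maxHeartbeats 1000000
set_option maxHeartbeats 1000000

section Aux
variable {H : Type*} [NormedAddCommGroup H] [InnerProductSpace ℝ H] [CompleteSpace H]
  (V W : Submodule ℝ H)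

lemma myKerEq (hW : IsClosed (W : Set H)) :
    LinearMap.ker ((Submodule.orthogonalProjectionOnto Wᗮ).toLinearMap.comp V.subtype)
      = Submodule.comap V.subtype (V ⊓ W) := by
  haveI : CompleteSpace W := hW.completeSpace_coe
  ext v
  simp only [Submodule.mem_comap, LinearMap.mem_ker, LinearMap.coe_comp, Function.comp_apply,
    Submodule.coe_subtype, ContinuousLinearMap.coe_coe, Submodule.mem_inf]
  rw [Submodule.orthogonalProjectionOnto_eq_zero_iff, Submodule.orthogonal_orthogonal]
  exact ⟨fun h => ⟨v.2, h⟩, fun h => h.2⟩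

lemma myMapRange (hW : IsClosed (W : Set H)) :
    Submodule.map Wᗮ.subtype
        (LinearMap.range ((Submodule.orthogonalProjectionOnto Wᗮ).toLinearMap.comp V.subtype))
      = (V ⊔ W) ⊓ Wᗮ := by
  haveI : CompleteSpace W := hW.completeSpace_coe
  ext x
  simp only [Submodule.mem_map, LinearMap.mem_range, LinearMap.coe_comp, Function.comp_apply,
    Submodule.coe_subtype, ContinuousLinearMap.coe_coe, Submodule.mem_inf]
  constructor
  · rintro ⟨y, ⟨v, rfl⟩, rfl⟩
    refine ⟨?_, (Submodule.orthogonalProjectionOnto Wᗮ (v : H)).2⟩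
    have h : (↑(Submodule.orthogonalProjectionOnto W (v : H)) : H) + ↑(Submodule.orthogonalProjectionOnto Wᗮ (v : H)) = (v : H) :=
      W.starProjection_add_starProjection_orthogonal (v : H)
    have : (↑(Submodule.orthogonalProjectionOnto Wᗮ (v : H)) : H)
        = (v : H) - ↑(Submodule.orthogonalProjectionOnto W (v : H)) :=
      eq_sub_of_add_eq' h
    rw [this]
    exact Submodule.sub_mem _ (Submodule.mem_sup_left v.2)
      (Submodule.mem_sup_right (Submodule.orthogonalProjectionOnto W (v : H)).2)
  · rintro ⟨hx, hx'⟩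
    rcases Submodule.mem_sup.mp hx with ⟨y, hy, z, hz, rfl⟩
    refine ⟨Submodule.orthogonalProjectionOnto Wᗮ y, ⟨⟨y, hy⟩, rfl⟩, ?_⟩
    have hz0 : Submodule.orthogonalProjectionOnto Wᗮ z = 0 :=
      Submodule.orthogonalProjectionOnto_eq_zero_iff.mpr (W.le_orthogonal_orthogonal hz)
    have : Submodule.orthogonalProjectionOnto Wᗮ (y + z) = ⟨y + z, hx'⟩ :=
      Submodule.orthogonalProjectionOnto_mem_subspace_eq_self (⟨y + z, hx'⟩ : ↥Wᗮ)
    have hy' : Submodule.orthogonalProjectionOnto Wᗮ y = ⟨y + z, hx'⟩ := by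
      rw [← this, map_add, hz0, add_zero]
    rw [hy']

lemma mySupEq (hW : IsClosed (W : Set H)) :
    V ⊔ W = W ⊔ ((V ⊔ W) ⊓ Wᗮ) := by
  haveI : CompleteSpace W := hW.completeSpace_coe
  refine le_antisymm (sup_le ?_ le_sup_left) (sup_le le_sup_right inf_le_left)
  intro v hv
  have h : (↑(Submodule.orthogonalProjectionOnto W v) : H) + ↑(Submodule.orthogonalProjectionOnto Wᗮ v) = v :=
      W.starProjection_add_starProjection_orthogonal v
  have h1 : (↑(Submodule.orthogonalProjectionOnto W v) : H) ∈ W ⊔ ((V ⊔ W) ⊓ Wᗮ) :=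
    Submodule.mem_sup_left (Submodule.orthogonalProjectionOnto W v).2
  have h2 : (↑(Submodule.orthogonalProjectionOnto Wᗮ v) : H) ∈ (V ⊔ W) ⊓ Wᗮ := by
    rw [← myMapRange V W hW]
    exact ⟨Submodule.orthogonalProjectionOnto Wᗮ v, ⟨⟨v, hv⟩, rfl⟩, rfl⟩
  rw [← h]
  exact Submodule.add_mem _ h1 (Submodule.mem_sup_right h2)

lemma mySupClosedIff (hW : IsClosed (W : Set H)) (X : Submodule ℝ H) (hX : X ≤ Wᗮ) :
    IsClosed ((W ⊔ X : Submodule ℝ H) : Set H) ↔ IsClosed (X : Set H) := by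
  haveI : CompleteSpace W := hW.completeSpace_coe
  constructor
  · intro h
    have hXeq : (X : Set H) = ((W ⊔ X : Submodule ℝ H) : Set H) ∩ (Wᗮ : Set H) := by
      ext z
      simp only [Set.mem_inter_iff, SetLike.mem_coe]
      constructor
      · exact fun hz => ⟨Submodule.mem_sup_right hz, hX hz⟩
      · rintro ⟨hz1, hz2⟩
        rcases Submodule.mem_sup.mp hz1 with ⟨w, hw, x, hx, rfl⟩
        have hwmem : w ∈ W ⊓ Wᗮ := ⟨hw, by
          have : w = (w + x) - x := by abel
          rw [this]
          exact Submodule.sub_mem _ hz2 (hX hx)⟩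
        rw [Submodule.inf_orthogonal_eq_bot W] at hwmem
        simp only [Submodule.mem_bot] at hwmem
        rw [hwmem, zero_add]
        exact hx
    rw [hXeq]
    exact h.inter W.isClosed_orthogonal
  · intro h
    have hpre : ((W ⊔ X : Submodule ℝ H) : Set H)
        = (fun z => (↑(Submodule.orthogonalProjectionOnto Wᗮ z) : H)) ⁻¹' (X : Set H) := by
      ext z
      simp only [Set.mem_preimage, SetLike.mem_coe]
      constructor
      · intro hz
        rcases Submodule.mem_sup.mp hz with ⟨w, hw, x, hx, rfl⟩
        have hw0 : Submodule.orthogonalProjectionOnto Wᗮ w = 0 :=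
          Submodule.orthogonalProjectionOnto_eq_zero_iff.mpr (W.le_orthogonal_orthogonal hw)
        have hxx : Submodule.orthogonalProjectionOnto Wᗮ x = ⟨x, hX hx⟩ :=
          Submodule.orthogonalProjectionOnto_mem_subspace_eq_self (⟨x, hX hx⟩ : ↥Wᗮ)
        rw [map_add, hw0, hxx, zero_add]
        exact hx
      · intro hz
        have h : (↑(Submodule.orthogonalProjectionOnto W z) : H) + ↑(Submodule.orthogonalProjectionOnto Wᗮ z) = z :=
      W.starProjection_add_starProjection_orthogonal z
        rw [← h]
        exact Submodule.add_mem _ (Submodule.mem_sup_left (Submodule.orthogonalProjectionOnto W z).2)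
          (Submodule.mem_sup_right hz)
    rw [hpre]
    exact IsClosed.preimage (Wᗮ.subtypeL.comp (Submodule.orthogonalProjectionOnto Wᗮ)).continuous h

noncomputable def myOrthEquiv (Q : Submodule ℝ ↥Wᗮ)
    (hQ : Submodule.map Wᗮ.subtype Q = (V ⊔ W) ⊓ Wᗮ)
    (hsup : V ⊔ W = W ⊔ ((V ⊔ W) ⊓ Wᗮ)) :
    ↥Qᗮ ≃ₗ[ℝ] ↥((V ⊔ W)ᗮ) where
  toFun x := ⟨((x : ↥Wᗮ) : H), by
    intro u hu
    rw [hsup] at hu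
    rcases Submodule.mem_sup.mp hu with ⟨w, hw, t, ht, rfl⟩
    rw [inner_add_left]
    have h1 : ⟪w, ((x : ↥Wᗮ) : H)⟫ = 0 := (x : ↥Wᗮ).2 w hw
    rw [← hQ] at ht
    rcases ht with ⟨u', hu', rfl⟩
    have h2 : ⟪(Wᗮ.subtype u' : H), ((x : ↥Wᗮ) : H)⟫ = 0 := x.2 u' hu'
    rw [h1, h2, add_zero]⟩
  map_add' x y := rfl
  map_smul' c x := rfl
  invFun y := ⟨⟨(y : H), Submodule.orthogonal_le le_sup_right y.2⟩, by
    intro u hu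
    have hmem : (Wᗮ.subtype u : H) ∈ (V ⊔ W) ⊓ Wᗮ := by
      rw [← hQ]; exact ⟨u, hu, rfl⟩
    exact y.2 (u : H) hmem.1⟩
  left_inv x := Subtype.ext (Subtype.ext rfl)
  right_inv y := Subtype.ext rfl

end Aux

/-- Fredholm pairs via projections: `(V, W)` is a Fredholm pair if and only if the
restriction to `V` of the orthogonal projection onto `W^⊥` is Fredholm, and in that
case the index of the pair equals the Fredholm index of the projection. -/
theorem statement8 {H : Type*} [NormedAddCommGroup H] [InnerProductSpace ℝ H] [CompleteSpace H]
    (V W : Submodule ℝ H) (hV : IsClosed (V : Set H)) (hW : IsClosed (W : Set H)) :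
    let P : ↥V →ₗ[ℝ] ↥Wᗮ := (Submodule.orthogonalProjectionOnto Wᗮ).toLinearMap.comp V.subtype
    ((IsClosed ((V ⊔ W : Submodule ℝ H) : Set H) ∧
        FiniteDimensional ℝ ↥(V ⊓ W) ∧ FiniteDimensional ℝ (H ⧸ (V ⊔ W))) ↔
      (FiniteDimensional ℝ ↥(LinearMap.ker P) ∧
        IsClosed ((LinearMap.range P : Submodule ℝ ↥Wᗮ) : Set ↥Wᗮ) ∧
        FiniteDimensional ℝ (↥Wᗮ ⧸ LinearMap.range P))) ∧
    ((IsClosed ((V ⊔ W : Submodule ℝ H) : Set H) ∧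
        FiniteDimensional ℝ ↥(V ⊓ W) ∧ FiniteDimensional ℝ (H ⧸ (V ⊔ W))) →
      (Module.finrank ℝ ↥(V ⊓ W) : ℤ) - Module.finrank ℝ (H ⧸ (V ⊔ W)) =
        (Module.finrank ℝ ↥(LinearMap.ker P) : ℤ) -
          Module.finrank ℝ (↥Wᗮ ⧸ LinearMap.range P)) := by
  intro P
  haveI : CompleteSpace W := hW.completeSpace_coe
  have hker : LinearMap.ker P = Submodule.comap V.subtype (V ⊓ W) := myKerEq V W hW
  have hrange : Submodule.map Wᗮ.subtype (LinearMap.range P) = (V ⊔ W) ⊓ Wᗮ :=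
    myMapRange V W hW
  have hsup : V ⊔ W = W ⊔ ((V ⊔ W) ⊓ Wᗮ) := mySupEq V W hW
  have ekero : ↥(LinearMap.ker P) ≃ₗ[ℝ] ↥(V ⊓ W) :=
    (LinearEquiv.ofEq _ _ hker).trans (Submodule.comapSubtypeEquivOfLe inf_le_left)
  have hemb := (W.isClosed_orthogonal).isClosedEmbedding_subtypeVal
  have himg : (Subtype.val '' ((LinearMap.range P : Submodule ℝ ↥Wᗮ) : Set ↥Wᗮ))
      = (((V ⊔ W) ⊓ Wᗮ : Submodule ℝ H) : Set H) := by
    rw [← hrange, Submodule.map_coe, Submodule.coe_subtype]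
  have hclosed : IsClosed ((V ⊔ W : Submodule ℝ H) : Set H) ↔
      IsClosed ((LinearMap.range P : Submodule ℝ ↥Wᗮ) : Set ↥Wᗮ) := by
    constructor
    · intro h
      have h2 := (mySupClosedIff W hW _ inf_le_right).mp (hsup ▸ h)
      rw [← himg] at h2
      exact hemb.isClosed_iff_image_isClosed.mpr h2
    · intro h
      have h3 : IsClosed (Subtype.val '' ((LinearMap.range P : Submodule ℝ ↥Wᗮ) : Set ↥Wᗮ)) :=
        hemb.isClosed_iff_image_isClosed.mp h
      rw [himg] at h3
      rw [hsup]
      exact (mySupClosedIff W hW _ inf_le_right).mpr h3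
  have hquot : IsClosed ((V ⊔ W : Submodule ℝ H) : Set H) →
      Nonempty ((↥Wᗮ ⧸ LinearMap.range P) ≃ₗ[ℝ] (H ⧸ (V ⊔ W))) := by
    intro h1
    haveI : CompleteSpace ↥(V ⊔ W) := h1.completeSpace_coe
    have hPc : IsClosed ((LinearMap.range P : Submodule ℝ ↥Wᗮ) : Set ↥Wᗮ) := hclosed.mp h1
    haveI : CompleteSpace ↥(LinearMap.range P) := hPc.completeSpace_coe
    exact ⟨(Submodule.quotientEquivOfIsCompl _ _
        Submodule.isCompl_orthogonal_of_hasOrthogonalProjection).trans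
      ((myOrthEquiv V W _ hrange hsup).trans
        (Submodule.quotientEquivOfIsCompl _ _
          Submodule.isCompl_orthogonal_of_hasOrthogonalProjection).symm)⟩
  refine ⟨⟨?_, ?_⟩, ?_⟩
  · rintro ⟨h1, h2, h3⟩
    obtain ⟨eQ⟩ := hquot h1
    haveI := h2; haveI := h3
    exact ⟨ekero.symm.finiteDimensional, hclosed.mp h1, eQ.symm.finiteDimensional⟩
  · rintro ⟨h1, h2, h3⟩
    have hc : IsClosed ((V ⊔ W : Submodule ℝ H) : Set H) := hclosed.mpr h2
    obtain ⟨eQ⟩ := hquot hc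
    haveI := h1; haveI := h3
    exact ⟨hc, ekero.finiteDimensional, eQ.finiteDimensional⟩
  · rintro ⟨h1, h2, h3⟩
    obtain ⟨eQ⟩ := hquot h1
    rw [ekero.finrank_eq, eQ.finrank_eq]
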